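/- For natural numbers k > 5, define E_FPDM(k) = (1 - (1/5)^((k-4)/4))·(1/5)^(1/4) + (1/5)^((k-4)/4)·(1 - (1/k)^(4/(k-1)))·(1/k)^(1/(k-1)) and E_opt(k) = (1/(1+k))^(1/k)·(k/(1+k)). Then the ratio E_FPDM(k)/E_opt(k) tends to (1/5)^(1/4) as k tends to infinity. -/

import Mathlib

open Filter Real

private lemma aux_A : Tendsto (fun k : ℕ => (1/5:ℝ) ^ (((k:ℝ)-4)/4)) atTop (nhds 0) := by
  apply (tendsto_rpow_atTop_of_base_lt_one (1/5) (by norm_num) (by norm_num)).comp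
  apply Tendsto.atTop_div_const (by norm_num)
  exact tendsto_atTop_add_const_right _ _ tendsto_natCast_atTop_atTop

private lemma aux_gen (a : ℝ) :
    Tendsto (fun k : ℕ => (1/(k:ℝ)) ^ (a/((k:ℝ)-1))) atTop (nhds 1) := by
  have h := (tendsto_rpow_div_mul_add (-a) 1 (-1) zero_ne_one).comp
    (tendsto_natCast_atTop_atTop (R := ℝ))
  apply h.congr'
  filter_upwards [eventually_ge_atTop 1] with k hk1
  have hkpos : (0:ℝ) < k := by exact_mod_cast hk1
  simp only [Function.comp_apply]
  rw [one_div, Real.inv_rpow hkpos.le, ← Real.rpow_neg hkpos.le]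
  congr 1
  ring

private lemma aux_D : Tendsto (fun k : ℕ => (1/(1+(k:ℝ))) ^ ((1:ℝ)/(k:ℝ))) atTop (nhds 1) := by
  have hk1 : Tendsto (fun k : ℕ => 1+(k:ℝ)) atTop atTop :=
    tendsto_atTop_add_const_left _ _ tendsto_natCast_atTop_atTop
  have h := (tendsto_rpow_div_mul_add (-1) 1 (-1) zero_ne_one).comp hk1
  apply h.congr'
  filter_upwards [eventually_ge_atTop 1] with k hk1
  have hkpos : (0:ℝ) < k := by exact_mod_cast hk1
  have hkpos' : (0:ℝ) < 1 + k := by linarith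
  simp only [Function.comp_apply]
  rw [one_div, Real.inv_rpow hkpos'.le, ← Real.rpow_neg hkpos'.le]
  congr 1
  field_simp
  rw [show (1:ℝ) + k + -1 = k by ring, div_self hkpos.ne']

private lemma aux_E : Tendsto (fun k : ℕ => (k:ℝ)/(1+(k:ℝ))) atTop (nhds 1) := by
  have h : Tendsto (fun k : ℕ => 1 - 1/(1+(k:ℝ))) atTop (nhds (1 - 0)) := by
    apply tendsto_const_nhds.sub
    have := tendsto_one_div_add_atTop_nhds_zero_nat (𝕜 := ℝ)
    apply this.congr
    intro k; rw [add_comm]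
  rw [sub_zero] at h
  apply h.congr'
  filter_upwards [eventually_ge_atTop 1] with k hk1
  have hkpos : (0:ℝ) < k := by exact_mod_cast hk1
  field_simp
  ring

/-- With `x = 5` neighbours, the ratio `E_FPDM(k) / E_opt(k)` tends to
`(1/5)^(1/4)` as `k → ∞`. -/
theorem stmt_11 :
    Filter.Tendsto
      (fun k : ℕ =>
        ((1 - (1 / 5 : ℝ) ^ (((k : ℝ) - 4) / 4)) * (1 / 5 : ℝ) ^ ((1 : ℝ) / 4) +
            (1 / 5 : ℝ) ^ (((k : ℝ) - 4) / 4) *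
              (1 - (1 / (k : ℝ)) ^ ((4 : ℝ) / ((k : ℝ) - 1))) *
              (1 / (k : ℝ)) ^ ((1 : ℝ) / ((k : ℝ) - 1))) /
          ((1 / (1 + (k : ℝ))) ^ ((1 : ℝ) / k) * ((k : ℝ) / (1 + (k : ℝ)))))
      Filter.atTop (nhds ((1 / 5 : ℝ) ^ ((1 : ℝ) / 4))) := by
  have hA := aux_A
  have hB := aux_gen 4
  have hC := aux_gen 1
  have hD := aux_D
  have hE := aux_E
  have hnum : Tendsto
      (fun k : ℕ =>
        (1 - (1 / 5 : ℝ) ^ (((k : ℝ) - 4) / 4)) * (1 / 5 : ℝ) ^ ((1 : ℝ) / 4) +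
          (1 / 5 : ℝ) ^ (((k : ℝ) - 4) / 4) *
            (1 - (1 / (k : ℝ)) ^ ((4 : ℝ) / ((k : ℝ) - 1))) *
            (1 / (k : ℝ)) ^ ((1 : ℝ) / ((k : ℝ) - 1)))
      atTop (nhds ((1 - 0) * (1 / 5 : ℝ) ^ ((1 : ℝ) / 4) + 0 * (1 - 1) * 1)) :=
    ((tendsto_const_nhds.sub hA).mul tendsto_const_nhds).add
      ((hA.mul (tendsto_const_nhds.sub hB)).mul hC)
  have hden : Tendsto
      (fun k : ℕ => (1 / (1 + (k : ℝ))) ^ ((1 : ℝ) / k) * ((k : ℝ) / (1 + (k : ℝ))))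
      atTop (nhds (1 * 1)) := hD.mul hE
  have := hnum.div hden (by norm_num)
  simpa [Pi.div_def] using this
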